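/- For every integer k ≥ 2 and every integer n ≥ 1, the k-generalized Lucas number satisfies α^(n-1) ≤ L_n^(k) ≤ 2·α^n, where α is the unique real root of x^k − x^(k−1) − ... − x − 1 lying in the interval (1, 2). -/

import Mathlib

lemma lucas_aux_insert (m : ℕ) :
    Finset.Icc (1 : ℤ) ((m : ℤ) + 1) = insert ((m : ℤ) + 1) (Finset.Icc (1 : ℤ) (m : ℤ)) := by
  ext x
  simp only [Finset.mem_Icc, Finset.mem_insert]
  omega

/-- ∑_{i=1}^m α^(a-i) = α^(a-m) * ∑_{j<m} α^j -/
lemma lucas_aux_sum (α : ℝ) (hα : 0 < α) (m : ℕ) (a : ℤ) :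
    ∑ i ∈ Finset.Icc (1 : ℤ) (m : ℤ), α ^ (a - i)
      = α ^ (a - m) * ∑ j ∈ Finset.range m, α ^ j := by
  induction m generalizing a with
  | zero => simp
  | succ m ih =>
    rw [show ((m + 1 : ℕ) : ℤ) = (m : ℤ) + 1 by push_cast; ring, lucas_aux_insert m,
      Finset.sum_insert (by simp [Finset.mem_Icc]), ih a, geom_sum_succ]
    have h2 : α ^ (a - (m : ℤ)) = α ^ (a - ((m : ℤ) + 1)) * α := by
      rw [← zpow_add_one₀ (ne_of_gt hα)]
      congr 1
      ring
    rw [h2]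
    ring

/-- For k ≥ 2 and n ≥ 1, α^(n-1) ≤ L_n^(k) ≤ 2·α^n, where α is the unique real
    root of x^k − x^(k−1) − ... − x − 1 in (1, 2). -/
theorem lucas_bounds (k : ℕ) (hk : 2 ≤ k) (L : ℤ → ℤ)
    (hinit : ∀ j : ℤ, 2 - (k : ℤ) ≤ j → j ≤ -1 → L j = 0)
    (hL0 : L 0 = 2) (hL1 : L 1 = 1)
    (hrec : ∀ n : ℤ, 2 ≤ n → L n = ∑ i ∈ Finset.Icc (1 : ℤ) (k : ℤ), L (n - i))
    (α : ℝ) (hα1 : 1 < α) (hα2 : α < 2)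
    (hroot : α ^ k = ∑ i ∈ Finset.range k, α ^ i)
    (n : ℤ) (hn : 1 ≤ n) :
    α ^ (n - 1) ≤ (L n : ℝ) ∧ (L n : ℝ) ≤ 2 * α ^ n := by
  have hα0 : (0 : ℝ) < α := lt_trans one_pos hα1
  -- key sum identity: ∑_{i=1}^k α^(a-i) = α^a
  have hsum : ∀ a : ℤ, ∑ i ∈ Finset.Icc (1 : ℤ) (k : ℤ), α ^ (a - i) = α ^ a := by
    intro a
    rw [lucas_aux_sum α hα0 k a, ← hroot, ← zpow_natCast α k, ← zpow_add₀ (ne_of_gt hα0)]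
    congr 1
    ring
  -- strong induction on the bound N
  have main : ∀ N : ℕ, ∀ n : ℤ, 1 ≤ n → n ≤ (N : ℤ) →
      α ^ (n - 1) ≤ (L n : ℝ) ∧ (L n : ℝ) ≤ 2 * α ^ n := by
    intro N
    induction N with
    | zero => intro n h1 h2; omega
    | succ N ih =>
      intro n h1 h2
      rcases lt_or_eq_of_le h2 with h2' | h2'
      · exact ih n h1 (by omega)
      · -- n = N + 1
        rcases eq_or_lt_of_le h1 with hn1 | hn2
        · -- n = 1
          subst hn1
          rw [hL1]
          constructor
          · simp
          · simp only [zpow_one]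
            push_cast
            linarith
        · -- n ≥ 2
          have hn2 : 2 ≤ n := hn2
          have hrecn := hrec n hn2
          have hcast : (L n : ℝ) = ∑ i ∈ Finset.Icc (1 : ℤ) (k : ℤ), (L (n - i) : ℝ) := by
            rw [hrecn]; push_cast; ring
          constructor
          · -- lower bound
            by_cases hnk : (k : ℤ) + 1 ≤ n
            · -- all indices n - i ≥ 1
              rw [hcast, ← hsum (n - 1)]
              apply Finset.sum_le_sum
              intro i hi
              simp only [Finset.mem_Icc] at hi
              have h3 : 1 ≤ n - i := by omega
              have h4 : n - i ≤ (N : ℤ) := by omega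
              have := (ih (n - i) h3 h4).1
              calc α ^ (n - 1 - i) = α ^ (n - i - 1) := by ring_nf
                _ ≤ _ := this
            · -- 2 ≤ n ≤ k : sum contains L 0 = 2
              push_neg at hnk
              have hsub : Finset.Icc (1 : ℤ) n ⊆ Finset.Icc (1 : ℤ) (k : ℤ) := by
                apply Finset.Icc_subset_Icc le_rfl (by omega)
              have hzero : ∀ i ∈ Finset.Icc (1 : ℤ) (k : ℤ), i ∉ Finset.Icc (1 : ℤ) n →
                  (L (n - i) : ℝ) = 0 := by
                intro i hi hi'
                simp only [Finset.mem_Icc] at hi hi'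
                have : L (n - i) = 0 := hinit (n - i) (by omega) (by omega)
                rw [this]; norm_num
              rw [hcast, ← Finset.sum_subset hsub hzero]
              -- split off the top term i = n, i.e. L 0
              set m : ℕ := (n - 1).toNat with hm
              have hmz : (m : ℤ) = n - 1 := Int.toNat_of_nonneg (by omega)
              have hsplit : ∑ i ∈ Finset.Icc (1 : ℤ) n, (L (n - i) : ℝ)
                  = (∑ i ∈ Finset.Icc (1 : ℤ) (m : ℤ), (L (n - i) : ℝ)) + 2 := by
                have : Finset.Icc (1 : ℤ) n = insert ((m : ℤ) + 1) (Finset.Icc (1 : ℤ) (m : ℤ)) := by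
                  rw [← lucas_aux_insert m]; congr 1; omega
                rw [this, Finset.sum_insert (by simp [Finset.mem_Icc])]
                have : n - ((m : ℤ) + 1) = 0 := by omega
                rw [this, hL0]
                push_cast; ring
              rw [hsplit]
              -- each term L(n-i) ≥ α^(n-i-1) = α^(n-1-i)
              have hterm : ∑ i ∈ Finset.Icc (1 : ℤ) (m : ℤ), α ^ (n - 1 - i)
                  ≤ ∑ i ∈ Finset.Icc (1 : ℤ) (m : ℤ), (L (n - i) : ℝ) := by
                apply Finset.sum_le_sum
                intro i hi
                simp only [Finset.mem_Icc] at hi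
                have h3 : 1 ≤ n - i := by omega
                have h4 : n - i ≤ (N : ℤ) := by omega
                have := (ih (n - i) h3 h4).1
                calc α ^ (n - 1 - i) = α ^ (n - i - 1) := by ring_nf
                  _ ≤ _ := this
              -- geometric sum value
              have hgeom : ∑ i ∈ Finset.Icc (1 : ℤ) (m : ℤ), α ^ (n - 1 - i)
                  = ∑ j ∈ Finset.range m, α ^ j := by
                rw [lucas_aux_sum α hα0 m (n - 1)]
                have : n - 1 - (m : ℤ) = 0 := by omega
                rw [this, zpow_zero, one_mul]
              have hG : α ^ m - 1 ≤ ∑ j ∈ Finset.range m, α ^ j := by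
                have hmul : (∑ j ∈ Finset.range m, α ^ j) * (α - 1) = α ^ m - 1 :=
                  geom_sum_mul α m
                have hGpos : (0 : ℝ) ≤ ∑ j ∈ Finset.range m, α ^ j :=
                  Finset.sum_nonneg fun j _ => pow_nonneg (le_of_lt hα0) j
                nlinarith
              have hfin : α ^ (n - 1) = α ^ m := by
                rw [← zpow_natCast α m, hmz]
              rw [hfin]
              have h1le : (1 : ℝ) ≤ α ^ m := one_le_pow₀ (le_of_lt hα1)
              linarith
          · -- upper bound
            have hrhs : (2 : ℝ) * α ^ n = ∑ i ∈ Finset.Icc (1 : ℤ) (k : ℤ),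
                2 * α ^ (n - i) := by rw [← Finset.mul_sum, hsum n]
            rw [hcast, hrhs]
            apply Finset.sum_le_sum
            intro i hi
            simp only [Finset.mem_Icc] at hi
            rcases lt_trichotomy (n - i) 0 with hni | hni | hni
            · have : L (n - i) = 0 := hinit (n - i) (by omega) (by omega)
              rw [this]
              push_cast
              positivity
            · rw [hni, hL0]
              have : (0:ℝ) < α ^ (0 : ℤ) := by positivity
              simp only [zpow_zero] at this ⊢
              norm_num
            · have h3 : 1 ≤ n - i := hni
              have h4 : n - i ≤ (N : ℤ) := by omega
              exact (ih (n - i) h3 h4).2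
  exact main n.toNat n hn (by omega)
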